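/- arXiv:1612.07819 — 5 statements merged into one kernel-verified Lean document; each statement's English description precedes it below -/
import Mathlib

section
/- The sum over odd positive integers d of μ(d)·log(d)/d² equals −(8/π²)·∑_{p odd prime} (log p)/(p² − 1). -/
open ArithmeticFunction Real LSeries
open scoped ArithmeticFunction.Moebius ArithmeticFunction.zeta

namespace Stmt5Aux

noncomputable def f : ℕ → ℝ := fun n => if Odd n then (μ n : ℝ) / (n : ℝ) ^ 2 else 0
noncomputable def g : ℕ → ℝ := fun n => if Odd n then (Λ n : ℝ) / (n : ℝ) ^ 2 else 0

lemma f_zero : f 0 = 0 := by simp [f]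
lemma g_zero : g 0 = 0 := by simp [g]

lemma summable_m_norm : Summable (fun n : ℕ => ‖(μ n : ℝ) / (n : ℝ) ^ 2‖) := by
  refine Summable.of_nonneg_of_le (fun n => norm_nonneg _) (fun n => ?_)
    ((Real.summable_one_div_nat_pow (p := 2)).2 one_lt_two)
  rcases Nat.eq_zero_or_pos n with rfl | hn
  · simp
  · rw [Real.norm_eq_abs, abs_div, abs_of_nonneg (show (0:ℝ) ≤ (n:ℝ)^2 by positivity)]
    gcongr
    exact_mod_cast (abs_moebius_le_one (n := n))

lemma summable_f_norm : Summable (fun n : ℕ => ‖f n‖) := by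
  refine summable_m_norm.of_nonneg_of_le (fun n => norm_nonneg _) (fun n => ?_)
  unfold f
  split
  · exact le_rfl
  · simp only [norm_zero]; exact norm_nonneg _

lemma summable_L_norm : Summable (fun n : ℕ => ‖(Λ n : ℝ) / (n : ℝ) ^ 2‖) := by
  have h := ArithmeticFunction.LSeriesSummable_vonMangoldt (s := 2) (by norm_num)
  rw [LSeriesSummable, ← summable_norm_iff] at h
  refine h.of_nonneg_of_le (fun n => norm_nonneg _) (fun n => ?_)
  rcases Nat.eq_zero_or_pos n with rfl | hn
  · simp
  · rw [LSeries.term_of_ne_zero hn.ne', norm_div, norm_div]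
    apply le_of_eq
    congr 1
    · exact (Complex.norm_real _).symm
    · rw [Complex.norm_natCast_cpow_of_pos hn]
      rw [Real.norm_eq_abs, abs_of_nonneg (show (0:ℝ) ≤ (n:ℝ)^2 by positivity)]
      norm_num

lemma summable_g_norm : Summable (fun n : ℕ => ‖g n‖) := by
  refine summable_L_norm.of_nonneg_of_le (fun n => norm_nonneg _) (fun n => ?_)
  unfold g
  split
  · exact le_rfl
  · simp only [norm_zero]; exact norm_nonneg _

/-- Real Dirichlet convolution sum formula. -/
lemma hasSum_conv {F G : ℕ → ℝ} (hF0 : F 0 = 0) (hG0 : G 0 = 0)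
    (hF : Summable fun n => ‖F n‖) (hG : Summable fun n => ‖G n‖) :
    HasSum (fun n : ℕ => ∑ p ∈ n.divisorsAntidiagonal, F p.1 * G p.2)
      ((∑' n, F n) * (∑' n, G n)) := by
  have hsum : Summable fun p : ℕ × ℕ => F p.1 * G p.2 := summable_mul_of_summable_norm hF hG
  have h := (HasSum.mul hF.of_norm.hasSum hG.of_norm.hasSum hsum).tsum_fiberwise
    (fun p : ℕ × ℕ => p.1 * p.2)
  convert h using 2 with n
  case e'_3 => rfl
  rcases eq_or_ne n 0 with rfl | hn
  · rw [Nat.divisorsAntidiagonal_zero, Finset.sum_empty]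
    symm
    have hz : ∀ q : (fun p : ℕ × ℕ => p.1 * p.2) ⁻¹' {0}, F q.val.1 * G q.val.2 = 0 := by
      rintro ⟨⟨a, b⟩, hq⟩
      rcases Nat.mul_eq_zero.mp (Set.mem_singleton_iff.mp hq) with rfl | rfl
      · simp [hF0]
      · simp [hG0]
    simp [hz]
  · rw [show (fun p : ℕ × ℕ => p.1 * p.2) ⁻¹' {n} = ↑n.divisorsAntidiagonal by
      ext p; simp [Nat.mem_divisorsAntidiagonal, hn, eq_comm],
      Finset.tsum_subtype' n.divisorsAntidiagonal fun p => F p.1 * G p.2]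

/-- The key arithmetic-function identity μ(n)·log(n) = −(μ * Λ)(n). -/
lemma moebius_log_eq (n : ℕ) :
    (μ n : ℝ) * Real.log n
      = -(((μ : ArithmeticFunction ℤ) : ArithmeticFunction ℝ) * Λ) n := by
  set Mu : ArithmeticFunction ℝ := ((μ : ArithmeticFunction ℤ) : ArithmeticFunction ℝ) with hMu
  have h1 : ((ζ : ArithmeticFunction ℝ) * (pmul Mu ArithmeticFunction.log)) = -Λ := by
    ext m
    rw [coe_zeta_mul_apply]
    simpa [pmul_apply, log_apply, hMu, intCoe_apply] using (sum_moebius_mul_log_eq (n := m))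
  have h2 : pmul Mu ArithmeticFunction.log = -(Mu * Λ) := by
    calc pmul Mu ArithmeticFunction.log
        = 1 * pmul Mu ArithmeticFunction.log := (one_mul _).symm
      _ = (Mu * ↑ζ) * pmul Mu ArithmeticFunction.log := by
          rw [hMu, coe_moebius_mul_coe_zeta]
      _ = Mu * ((↑ζ : ArithmeticFunction ℝ) * pmul Mu ArithmeticFunction.log) := by
          rw [mul_assoc]
      _ = -(Mu * Λ) := by rw [h1]; exact mul_neg Mu Λ
  have := congrArg (fun F : ArithmeticFunction ℝ => F n) h2
  simpa [pmul_apply, log_apply, hMu, intCoe_apply] using this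

lemma odd_of_dvd {a n : ℕ} (h : a ∣ n) (hn : Odd n) : Odd a := by
  by_contra h'
  obtain ⟨c, rfl⟩ := h
  exact (Nat.not_odd_iff_even.mpr ((Nat.not_odd_iff_even.mp h').mul_right c)) hn

/-- pointwise: LHS term equals minus the convolution term. -/
lemma conv_eq (n : ℕ) :
    (if Odd n then (μ n : ℝ) * Real.log n / (n : ℝ) ^ 2 else 0)
      = -∑ p ∈ n.divisorsAntidiagonal, f p.1 * g p.2 := by
  by_cases hn : Odd n
  · rw [if_pos hn]
    have key : ∀ p ∈ n.divisorsAntidiagonal, f p.1 * g p.2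
        = (((μ : ArithmeticFunction ℤ) : ArithmeticFunction ℝ) p.1 * Λ p.2) / (n : ℝ) ^ 2 := by
      rintro ⟨a, b⟩ hp
      obtain ⟨hab, -⟩ := Nat.mem_divisorsAntidiagonal.mp hp
      have ha : Odd a := odd_of_dvd (Dvd.intro b hab) hn
      have hb : Odd b := odd_of_dvd (Dvd.intro_left a hab) hn
      simp only [f, g, if_pos ha, if_pos hb]
      have hnn : ((n : ℝ)) ^ 2 = (a : ℝ) ^ 2 * (b : ℝ) ^ 2 := by
        rw [← hab]; push_cast; ring
      rw [div_mul_div_comm, ← hnn, intCoe_apply]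
    rw [Finset.sum_congr rfl key, ← Finset.sum_div, ← ArithmeticFunction.mul_apply,
      ← neg_div, ← moebius_log_eq]
  · rw [if_neg hn, Finset.sum_eq_zero, neg_zero]
    rintro ⟨a, b⟩ hp
    obtain ⟨hab, -⟩ := Nat.mem_divisorsAntidiagonal.mp hp
    by_cases ha : Odd a
    · have hb : ¬Odd b := fun hb => hn (hab ▸ ha.mul hb)
      simp [g, hb]
    · simp [f, ha]

open scoped LSeries.notation in
lemma tsum_m_eq : ∑' n : ℕ, ((μ n : ℝ) / (n : ℝ) ^ 2) = 6 / π ^ 2 := by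
  have h2 : (1 : ℝ) < (2 : ℂ).re := by norm_num
  have hmul := ArithmeticFunction.LSeries_zeta_mul_Lseries_moebius (s := 2) h2
  rw [ArithmeticFunction.LSeries_zeta_eq_riemannZeta h2, riemannZeta_two] at hmul
  -- L ↗μ 2 = 6 / π²
  have hπ : (π : ℂ) ≠ 0 := by exact_mod_cast Real.pi_ne_zero
  have hLμ : L ↗μ 2 = 6 / (π : ℂ) ^ 2 := by
    field_simp at hmul ⊢
    linear_combination hmul
  have hofReal : ((∑' n : ℕ, ((μ n : ℝ) / (n : ℝ) ^ 2) : ℝ) : ℂ) = L ↗μ 2 := by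
    rw [Complex.ofReal_tsum]
    refine tsum_congr fun n => ?_
    rcases eq_or_ne n 0 with rfl | hn
    · simp [LSeries.term]
    · rw [LSeries.term_of_ne_zero hn, show ((2:ℂ)) = ((2:ℕ):ℂ) by norm_num,
        Complex.cpow_natCast]
      push_cast
      ring
  have : ((∑' n : ℕ, ((μ n : ℝ) / (n : ℝ) ^ 2) : ℝ) : ℂ) = ((6 / π ^ 2 : ℝ) : ℂ) := by
    rw [hofReal, hLμ]
    push_cast
    ring
  exact_mod_cast this

lemma tsum_f_eq : ∑' n : ℕ, f n = 8 / π ^ 2 := by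
  set M : ℕ → ℝ := fun n => (μ n : ℝ) / (n : ℝ) ^ 2 with hM
  have hMe : ∀ k : ℕ, M (2 * k) = -(1/4) * f k := by
    intro k
    rcases Nat.even_or_odd k with hk | hk
    · rcases Nat.eq_zero_or_pos k with rfl | hk0
      · simp [hM, f]
      · have h4 : ¬ Squarefree (2 * k) := by
          intro hsq
          have : (2 : ℕ) * 2 ∣ 2 * k := by
            obtain ⟨j, rfl⟩ := hk
            exact ⟨j, by ring⟩
          exact (Nat.squarefree_iff_prime_squarefree.mp hsq) 2 Nat.prime_two
            (by simpa [sq] using this)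
        rw [hM]
        simp [ArithmeticFunction.moebius_eq_zero_of_not_squarefree h4, f,
          Nat.not_odd_iff_even.mpr hk]
    · have hcop : Nat.Coprime 2 k := Nat.coprime_two_left.mpr hk
      have hμ : μ (2 * k) = μ 2 * μ k :=
        ArithmeticFunction.isMultiplicative_moebius.map_mul_of_coprime hcop
      have hμ2 : μ 2 = -1 := by
        simpa using ArithmeticFunction.moebius_apply_prime Nat.prime_two
      rw [hM]
      simp only [f, if_pos hk, hμ, hμ2]
      push_cast
      have hk0 : (k : ℝ) ≠ 0 := by
        exact_mod_cast hk.pos.ne'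
      field_simp
      ring
  have hsf : Summable f := summable_f_norm.of_norm
  have hsM : Summable M := summable_m_norm.of_norm
  have hMo : ∀ k : ℕ, M (2 * k + 1) = f (2 * k + 1) := by
    intro k
    rw [hM]
    simp [f, Nat.odd_iff]
  have hfo : ∀ k : ℕ, f (2 * k) = 0 := by
    intro k
    rcases Nat.eq_zero_or_pos k with rfl | hk0
    · simp [f]
    · have : ¬ Odd (2 * k) := by simp [Nat.not_odd_iff_even.mpr, parity_simps]
      simp [f, this]
  have hse : Summable (fun k => M (2 * k)) := by
    simp only [hMe]
    exact hsf.mul_left _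
  have hso : Summable (fun k => M (2 * k + 1)) :=
    hsM.comp_injective (fun a b h => by omega)
  have hsplit := tsum_even_add_odd hse hso
  have hsplitf := tsum_even_add_odd (f := f) (by simpa [hfo] using summable_zero)
    (hsf.comp_injective (fun a b h => by omega))
  have h1 : ∑' k : ℕ, M (2 * k) = -(1/4) * ∑' n, f n := by
    rw [tsum_congr hMe, tsum_mul_left]
  have h2 : ∑' k : ℕ, M (2 * k + 1) = ∑' n, f n := by
    rw [tsum_congr hMo]
    have h0 : ∑' k : ℕ, f (2 * k) = 0 := by simp [hfo]
    linarith [hsplitf]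
  rw [h1, h2, tsum_m_eq] at hsplit
  have hπ : π ≠ 0 := Real.pi_ne_zero
  field_simp at hsplit ⊢
  linarith

noncomputable def H : ℕ × ℕ → ℝ := fun q =>
  if q.1.Prime ∧ Odd q.1 then Real.log q.1 / ((q.1 : ℝ) ^ 2) ^ (q.2 + 1) else 0

lemma g_pow_eq {p : ℕ} (k : ℕ) (hp : p.Prime) (hodd : Odd p) :
    g (p ^ (k + 1)) = Real.log p / ((p : ℝ) ^ 2) ^ (k + 1) := by
  have hoddpk : Odd (p ^ (k + 1)) := hodd.pow
  rw [g]
  simp only [if_pos hoddpk]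
  rw [ArithmeticFunction.vonMangoldt_apply_pow (by omega),
    ArithmeticFunction.vonMangoldt_apply_prime hp]
  push_cast
  congr 1
  ring

lemma tsum_g_eq : ∑' n : ℕ, g n
    = ∑' p : ℕ, (if p.Prime ∧ Odd p then Real.log p / ((p : ℝ) ^ 2 - 1) else 0) := by
  classical
  -- properties of points in the support of H
  have hsupH : ∀ q : ℕ × ℕ, H q ≠ 0 → q.1.Prime ∧ Odd q.1 := by
    intro q hq
    by_contra h
    exact hq (by simp [H, h])
  -- the bijection
  set i : Function.support H → ℕ := fun q => q.val.1 ^ (q.val.2 + 1) with hi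
  have hinj : Function.Injective i := by
    rintro ⟨⟨p, k⟩, hq⟩ ⟨⟨r, l⟩, hq'⟩ h
    obtain ⟨hp, -⟩ := hsupH _ hq
    obtain ⟨hr, -⟩ := hsupH _ hq'
    simp only [hi] at h
    have hpr : p = r := by
      have hdvd : p ∣ r ^ (l + 1) := h ▸ dvd_pow_self p (Nat.succ_ne_zero k)
      exact (Nat.prime_dvd_prime_iff_eq hp hr).mp (hp.dvd_of_dvd_pow hdvd)
    subst hpr
    have hkl : k + 1 = l + 1 := Nat.pow_right_injective hp.two_le h
    apply Subtype.ext
    have hkl' : k = l := by omega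
    simp [hkl']
  have hfg : ∀ q : Function.support H, g (i q) = H q.val := by
    rintro ⟨⟨p, k⟩, hq⟩
    obtain ⟨hp, hodd⟩ := hsupH _ hq
    rw [hi]
    simp only
    rw [g_pow_eq k hp hodd, H, if_pos ⟨hp, hodd⟩]
  have hsupp : Function.support g ⊆ Set.range i := by
    intro n hn
    have hodd : Odd n := by
      by_contra h
      exact hn (by simp [g, h])
    have hΛ : Λ n ≠ 0 := by
      intro h
      exact hn (by simp [g, h])
    obtain ⟨p, k, hp, hk, rfl⟩ := ArithmeticFunction.vonMangoldt_ne_zero_iff.mp hΛ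
    have hp' : p.Prime := hp.nat_prime
    have hoddp : Odd p := odd_of_dvd (dvd_pow_self p hk.ne') hodd
    have hmem : (p, k - 1) ∈ Function.support H := by
      have hlog : 0 < Real.log p := Real.log_pos (by exact_mod_cast hp'.one_lt)
      have hpow : (0 : ℝ) < ((p : ℝ) ^ 2) ^ (k - 1 + 1) := by
        have : (0 : ℝ) < (p : ℝ) := by exact_mod_cast hp'.pos
        positivity
      simp only [Function.mem_support, H, if_pos (show p.Prime ∧ Odd p from ⟨hp', hoddp⟩)]
      exact ne_of_gt (div_pos hlog hpow)
    refine ⟨⟨(p, k - 1), hmem⟩, ?_⟩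
    simp only [hi]
    congr 1
    omega
  have hbij := tsum_eq_tsum_of_ne_zero_bij (f := g) i hinj hsupp hfg
  -- summability of H
  have hH : Summable H := by
    obtain ⟨a, ha⟩ := summable_g_norm.of_norm
    exact ⟨a, (hasSum_iff_hasSum_of_ne_zero_bij (f := g) i hinj hsupp hfg).mp ha⟩
  -- the inner geometric sums
  have hinner_eq : ∀ p : ℕ, p.Prime → Odd p → ∀ k : ℕ,
      H (p, k) = (Real.log p * ((p : ℝ) ^ 2)⁻¹) * (((p : ℝ) ^ 2)⁻¹) ^ k := by
    intro p hp hodd k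
    have hp0 : (0 : ℝ) < (p : ℝ) := by exact_mod_cast hp.pos
    have hHval : H (p, k) = Real.log p / ((p : ℝ) ^ 2) ^ (k + 1) := by
      simp [H, hp, hodd]
    rw [hHval, pow_succ, mul_comm (((p : ℝ) ^ 2) ^ k)]
    rw [div_eq_mul_inv, mul_inv, mul_assoc, inv_pow]
  have hr : ∀ p : ℕ, p.Prime → (0 : ℝ) ≤ ((p : ℝ) ^ 2)⁻¹ ∧ ((p : ℝ) ^ 2)⁻¹ < 1 := by
    intro p hp
    have hp2 : (2 : ℝ) ≤ (p : ℝ) := by exact_mod_cast hp.two_le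
    constructor
    · positivity
    · rw [inv_lt_one_iff₀]
      right
      nlinarith
  have hinner_sum : ∀ p : ℕ, Summable fun k : ℕ => H (p, k) := by
    intro p
    by_cases hp : p.Prime ∧ Odd p
    · rw [summable_congr (hinner_eq p hp.1 hp.2)]
      exact (summable_geometric_of_lt_one (hr p hp.1).1 (hr p hp.1).2).mul_left _
    · refine summable_of_ne_finset_zero (s := ∅) fun k _ => ?_
      simp [H, hp]
  have hinner : ∀ p : ℕ, ∑' k : ℕ, H (p, k)
      = (if p.Prime ∧ Odd p then Real.log p / ((p : ℝ) ^ 2 - 1) else 0) := by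
    intro p
    by_cases hp : p.Prime ∧ Odd p
    · rw [tsum_congr (hinner_eq p hp.1 hp.2), tsum_mul_left,
        tsum_geometric_of_lt_one (hr p hp.1).1 (hr p hp.1).2, if_pos hp]
      have hp2 : (2 : ℝ) ≤ (p : ℝ) := by exact_mod_cast hp.1.two_le
      have h1 : (p : ℝ) ^ 2 ≠ 0 := by positivity
      have h2 : (p : ℝ) ^ 2 - 1 ≠ 0 := by nlinarith
      field_simp
    · simp [H, hp]
  rw [hbij, Summable.tsum_prod' hH hinner_sum]
  exact tsum_congr hinner

end Stmt5Aux

/-- ∑_{d odd} μ(d) log d / d² = −(8/π²) ∑_{p odd prime} (log p)/(p² − 1). -/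
theorem stmt5 :
    ∑' d : ℕ, (if Odd d then (ArithmeticFunction.moebius d : ℝ) * Real.log d / (d : ℝ) ^ 2 else 0)
      = -(8 / Real.pi ^ 2) *
          ∑' p : ℕ, (if p.Prime ∧ Odd p then Real.log p / ((p : ℝ) ^ 2 - 1) else 0) := by
  have hconv := Stmt5Aux.hasSum_conv Stmt5Aux.f_zero Stmt5Aux.g_zero
    Stmt5Aux.summable_f_norm Stmt5Aux.summable_g_norm
  calc ∑' d : ℕ, (if Odd d then (ArithmeticFunction.moebius d : ℝ) * Real.log d / (d : ℝ) ^ 2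
        else 0)
      = ∑' n : ℕ, -∑ p ∈ n.divisorsAntidiagonal, Stmt5Aux.f p.1 * Stmt5Aux.g p.2 :=
        tsum_congr Stmt5Aux.conv_eq
    _ = -((∑' n, Stmt5Aux.f n) * (∑' n, Stmt5Aux.g n)) := by
        rw [tsum_neg, hconv.tsum_eq]
    _ = -(8 / Real.pi ^ 2) *
          ∑' p : ℕ, (if p.Prime ∧ Odd p then Real.log p / ((p : ℝ) ^ 2 - 1) else 0) := by
        rw [Stmt5Aux.tsum_f_eq, Stmt5Aux.tsum_g_eq]
        ring
end

section
/- Let λ, λ', λ'', λ''' be points in ℤ² all of the same norm √n, with λ ≠ λ' and λ'' ≠ λ'''. Then λ − λ' + λ'' − λ''' = 0 if and only if (λ = −λ'' and λ' = −λ''') or (λ = λ''' and λ' = λ''). -/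
lemma pos_aux (x y : ℤ) (h : ¬(x = 0 ∧ y = 0)) : 0 < x^2 + y^2 := by
  rcases Decidable.not_and_iff_or_not.mp h with h1 | h1
  · nlinarith [sq_nonneg y, sq_pos_of_ne_zero h1]
  · nlinarith [sq_nonneg x, sq_pos_of_ne_zero h1]

lemma zero_aux (x y : ℤ) (h : x^2 + y^2 = 0) : x = 0 ∧ y = 0 := by
  constructor <;> nlinarith [sq_nonneg x, sq_nonneg y]

set_option maxHeartbeats 1000000 in
lemma key10 (n a1 a2 b1 b2 c1 c2 : ℤ)
    (ha : a1^2+a2^2=n) (hb : b1^2+b2^2=n) (hc : c1^2+c2^2=n)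
    (hd : (a1+c1-b1)^2+(a2+c2-b2)^2=n)
    (hv : ¬(a1=b1 ∧ a2=b2)) (hw : ¬(c1=b1 ∧ c2=b2)) :
    a1+c1=0 ∧ a2+c2=0 := by
  have hvw2 : 2*((a1-b1)*(c1-b1) + (a2-b2)*(c2-b2)) = 0 := by
    linear_combination hd - hc - ha + hb
  have hvw : (a1-b1)*(c1-b1) + (a2-b2)*(c2-b2) = 0 := by linarith
  have hav : 2*(a1*(a1-b1)+a2*(a2-b2)) = (a1-b1)^2+(a2-b2)^2 := by
    linear_combination ha - hb
  have haw : 2*(a1*(c1-b1)+a2*(c2-b2)) = -((c1-b1)^2+(c2-b2)^2) := by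
    linear_combination hd - ha
  have hvpos : 0 < (a1-b1)^2+(a2-b2)^2 := pos_aux _ _ (by omega)
  have hwpos : 0 < (c1-b1)^2+(c2-b2)^2 := pos_aux _ _ (by omega)
  have hcross : ((a1-b1)*(c2-b2) - (a2-b2)*(c1-b1))^2
      = ((a1-b1)^2+(a2-b2)^2)*((c1-b1)^2+(c2-b2)^2) := by
    linear_combination (-((a1-b1)*(c1-b1)+(a2-b2)*(c2-b2)))*hvw
  have hbinet : ((a1-b1)^2+(a2-b2)^2)*((c1-b1)^2+(c2-b2)^2)
      = 2*(a1*(a2-b2)-a2*(a1-b1))*((a1-b1)*(c2-b2)-(a2-b2)*(c1-b1)) := by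
    linear_combination (-2*(a1*(a1-b1)+a2*(a2-b2)))*hvw + ((a1-b1)^2+(a2-b2)^2)*haw
  have hcross2 : 4*(a1*(a2-b2)-a2*(a1-b1))^2
      = ((a1-b1)^2+(a2-b2)^2)*((c1-b1)^2+(c2-b2)^2) := by
    have hmul : (((a1-b1)^2+(a2-b2)^2)*((c1-b1)^2+(c2-b2)^2)) *
        (4*(a1*(a2-b2)-a2*(a1-b1))^2 - ((a1-b1)^2+(a2-b2)^2)*((c1-b1)^2+(c2-b2)^2)) = 0 := by
      linear_combination (-4*(a1*(a2-b2)-a2*(a1-b1))^2)*hcross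
        - (2*(a1*(a2-b2)-a2*(a1-b1))*((a1-b1)*(c2-b2)-(a2-b2)*(c1-b1))
            + ((a1-b1)^2+(a2-b2)^2)*((c1-b1)^2+(c2-b2)^2))*hbinet
    rcases mul_eq_zero.mp hmul with h | h
    · exact absurd h (mul_pos hvpos hwpos).ne'
    · linarith
  have hlag : (a1*(a1-b1)+a2*(a2-b2))^2 + (a1*(a2-b2)-a2*(a1-b1))^2
      = n*((a1-b1)^2+(a2-b2)^2) := by
    linear_combination ((a1-b1)^2+(a2-b2)^2)*ha
  have hsum : ((a1-b1)^2+(a2-b2)^2) + ((c1-b1)^2+(c2-b2)^2) = 4*n := by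
    have h4 : ((a1-b1)^2+(a2-b2)^2) *
        (((a1-b1)^2+(a2-b2)^2) + ((c1-b1)^2+(c2-b2)^2) - 4*n) = 0 := by
      linear_combination (-(2*(a1*(a1-b1)+a2*(a2-b2)) + ((a1-b1)^2+(a2-b2)^2)))*hav
        + 4*hlag - hcross2
    rcases mul_eq_zero.mp h4 with h | h
    · exact absurd h hvpos.ne'
    · linarith
  have hzero : (a1+c1)^2 + (a2+c2)^2 = 0 := by
    linear_combination 4*ha - 2*hav + 2*haw - 2*hvw - hsum
  exact zero_aux _ _ hzero

/-- For equal-norm lattice points with λ ≠ λ', λ'' ≠ λ''':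
λ − λ' + λ'' − λ''' = 0 iff (λ = −λ'' and λ' = −λ''') or (λ = λ''' and λ' = λ''). -/
theorem stmt10 (n : ℤ) (a b c d : ℤ × ℤ)
    (ha : a.1 ^ 2 + a.2 ^ 2 = n) (hb : b.1 ^ 2 + b.2 ^ 2 = n)
    (hc : c.1 ^ 2 + c.2 ^ 2 = n) (hd : d.1 ^ 2 + d.2 ^ 2 = n)
    (hab : a ≠ b) (hcd : c ≠ d) :
    a - b + c - d = 0 ↔ (a = -c ∧ b = -d) ∨ (a = d ∧ b = c) := by
  constructor
  · intro h
    rw [Prod.ext_iff] at h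
    simp only [Prod.fst_sub, Prod.snd_sub, Prod.fst_add, Prod.snd_add, Prod.fst_zero,
      Prod.snd_zero] at h
    obtain ⟨h1, h2⟩ := h
    by_cases h0 : c.1 = b.1 ∧ c.2 = b.2
    · right
      constructor <;> rw [Prod.ext_iff] <;> omega
    · left
      have hab' : ¬(a.1 = b.1 ∧ a.2 = b.2) := by
        intro hx; exact hab (Prod.ext_iff.mpr hx)
      have hd' : (a.1 + c.1 - b.1) ^ 2 + (a.2 + c.2 - b.2) ^ 2 = n := by
        have e1 : a.1 + c.1 - b.1 = d.1 := by omega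
        have e2 : a.2 + c.2 - b.2 = d.2 := by omega
        rw [e1, e2]; exact hd
      obtain ⟨k1, k2⟩ := key10 n a.1 a.2 b.1 b.2 c.1 c.2 ha hb hc hd' hab' h0
      constructor <;> rw [Prod.ext_iff] <;>
        simp only [Prod.fst_neg, Prod.snd_neg] <;> omega
  · rintro (⟨h1, h2⟩ | ⟨h1, h2⟩) <;> subst h1 <;> subst h2 <;> abel
end

section
/- Let n = ∏_{i=1}^k p_i^{n_i} with all p_i ≡ 1 (mod 4) distinct primes, and let m = ∏_{i=1}^ℓ p_i^{n_i} for some ℓ ≤ k. Then for every θ ∈ ℝ, the number of lattice points λ ∈ ℤ² with ‖λ‖² = n and ‖λ − √n·e^{2πiθ}‖ < √(n/(2m)) is at most 4·∏_{i=ℓ+1}^k (n_i + 1). -/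
open GaussianInt Zsqrtd

lemma auxStmt11.norm_dvd {x y : GaussianInt} (h : x ∣ y) : x.norm ∣ y.norm := by
  obtain ⟨c, rfl⟩ := h; exact ⟨c.norm, (Zsqrtd.norm_mul x c)⟩

lemma auxStmt11.prime_of_norm {z : GaussianInt} {q : ℕ} (hq : q.Prime)
    (hz : z.norm = (q : ℤ)) : Prime z := by
  have hirr : Irreducible z := by
    constructor
    · intro hu
      rw [← Zsqrtd.norm_eq_one_iff, hz, Int.natAbs_natCast] at hu
      exact hq.one_lt.ne' hu
    · intro a b hab
      have h1 : a.norm.natAbs * b.norm.natAbs = q := by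
        have : z.norm = a.norm * b.norm := by rw [hab, Zsqrtd.norm_mul]
        rw [hz] at this
        have := congrArg Int.natAbs this
        simpa [Int.natAbs_mul] using this.symm
      rcases (Nat.Prime.eq_one_or_self_of_dvd hq _ ⟨_, h1.symm⟩ : a.norm.natAbs = 1 ∨ _) with h | h
      · exact Or.inl (Zsqrtd.norm_eq_one_iff.mp h)
      · right
        have : b.norm.natAbs = 1 := by
          have hq0 : 0 < q := hq.pos
          have h2 := h1
          rw [h] at h2
          nlinarith [h2, hq0]
        exact Zsqrtd.norm_eq_one_iff.mp this
  exact hirr.prime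

lemma auxStmt11.not_dvd_star {q : ℕ} (hq : q.Prime) (hq4 : q % 4 = 1) {π : GaussianInt}
    (hnorm : π.norm = (q : ℤ)) (hπ : Prime π) : ¬ π ∣ star π := by
  intro hdvd
  have hq5 : 5 ≤ q := by
    have := hq.two_le; omega
  have hnd : π.re * π.re + π.im * π.im = (q : ℤ) := by
    have := hnorm
    rw [Zsqrtd.norm_def] at this
    linarith
  have h1 : π ∣ ((2 * π.re : ℤ) : GaussianInt) := by
    have heq : ((2 * π.re : ℤ) : GaussianInt) = π + star π := by
      ext <;> simp [Zsqrtd.ext_iff] <;> ring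
    rw [heq]
    exact dvd_add dvd_rfl hdvd
  have h2 : π ∣ ((q : ℤ) : GaussianInt) := by
    rw [← hnorm, Zsqrtd.norm_eq_mul_conj]
    exact Dvd.intro _ rfl
  have hqZ : Prime (q : ℤ) := Nat.prime_iff_prime_int.mp hq
  have hre : ¬ (q : ℤ) ∣ 2 * π.re := by
    intro h
    rcases hqZ.dvd_mul.mp h with h | h
    · have := Int.le_of_dvd (by norm_num) h
      omega
    · rcases eq_or_ne π.re 0 with h0 | h0
      · rw [h0] at hnd
        simp at hnd
        exact hqZ.not_isSquare ⟨π.im, by linarith⟩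
      · have h1' : (q : ℤ) ≤ |π.re| := Int.le_of_dvd (abs_pos.mpr h0) ((dvd_abs _ _).mpr h)
        nlinarith [abs_nonneg π.re, sq_abs π.re, sq_nonneg π.im, hq.two_le]
  have hcop : IsCoprime ((q : ℤ)) (2 * π.re) := (hqZ.coprime_iff_not_dvd).mpr hre
  have hcop2 := hcop.map (Int.castRingHom GaussianInt)
  refine hπ.not_unit (hcop2.isUnit_of_dvd' ?_ ?_)
  · rw [eq_intCast]; exact_mod_cast h2
  · rw [eq_intCast]; exact h1

lemma auxStmt11.even_norm_sub {u v : GaussianInt} (h : u.norm = v.norm) :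
    2 ∣ (u - v).norm := by
  refine ⟨u.norm - (u.re * v.re + u.im * v.im), ?_⟩
  simp only [Zsqrtd.norm_def, Zsqrtd.re_sub, Zsqrtd.im_sub] at *
  linarith

/-- Let n = ∏ p_i^{n_i} with distinct primes p_i ≡ 1 (mod 4), and m = ∏_{i<ℓ} p_i^{n_i}.
For every θ, the number of lattice points λ with ‖λ‖² = n and
‖λ − √n e^{2πiθ}‖ < √(n/(2m)) is at most 4 ∏_{i≥ℓ} (n_i + 1). -/
theorem stmt11 (k ℓ : ℕ) (hl : ℓ ≤ k) (p : Fin k → ℕ)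
    (hp : ∀ i, (p i).Prime) (hp4 : ∀ i, p i % 4 = 1) (hinj : Function.Injective p)
    (e : Fin k → ℕ) (he : ∀ i, 1 ≤ e i)
    (n m : ℕ) (hn : n = ∏ i : Fin k, p i ^ e i)
    (hm : m = ∏ i : Fin k, if (i : ℕ) < ℓ then p i ^ e i else 1)
    (θ : ℝ) :
    Set.ncard {l : ℤ × ℤ | l.1 ^ 2 + l.2 ^ 2 = (n : ℤ) ∧
        ‖((l.1 : ℝ) : ℂ) + ((l.2 : ℝ) : ℂ) * Complex.I
            - (Real.sqrt n : ℂ) * Complex.exp (2 * Real.pi * θ * Complex.I)‖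
          < Real.sqrt ((n : ℝ) / (2 * (m : ℝ)))}
      ≤ 4 * ∏ i : Fin k, if ℓ ≤ (i : ℕ) then e i + 1 else 1 := by
  classical
  have hppos : ∀ i, 0 < p i := fun i => (hp i).pos
  have hnpos : 0 < n := by
    rw [hn]; exact Finset.prod_pos fun i _ => pow_pos (hppos i) _
  have hmpos : 0 < m := by
    rw [hm]
    refine Finset.prod_pos fun i _ => ?_
    split
    · exact pow_pos (hppos i) _
    · norm_num
  set M : ℕ := ∏ i : Fin k, if ℓ ≤ (i : ℕ) then p i ^ e i else 1 with hMdef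
  have hMpos : 0 < M := by
    refine Finset.prod_pos fun i _ => ?_
    split
    · exact pow_pos (hppos i) _
    · norm_num
  have hmM : m * M = n := by
    rw [hm, hMdef, ← Finset.prod_mul_distrib, hn]
    refine Finset.prod_congr rfl fun i _ => ?_
    rcases lt_or_ge (i : ℕ) ℓ with h | h
    · rw [if_pos h, if_neg (by omega), mul_one]
    · rw [if_neg (by omega), if_pos h, one_mul]
  -- choose Gaussian primes above each p i
  have hex : ∀ i, ∃ π : GaussianInt, π.norm = (p i : ℤ) ∧ Prime π := by
    intro i
    haveI : Fact (p i).Prime := ⟨hp i⟩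
    obtain ⟨a, b, hab⟩ := Nat.Prime.sq_add_sq (p := p i) (by have := hp4 i; omega)
    have hnorm : (⟨(a : ℤ), (b : ℤ)⟩ : GaussianInt).norm = (p i : ℤ) := by
      rw [Zsqrtd.norm_def, show ((p i : ℤ)) = ((a ^ 2 + b ^ 2 : ℕ) : ℤ) by rw [hab]]
      push_cast
      ring
    exact ⟨_, hnorm, auxStmt11.prime_of_norm (hp i) hnorm⟩
  choose π hπn hπp using hex
  have hπstar : ∀ i, ((p i : ℕ) : GaussianInt) = π i * star (π i) := by
    intro i
    have h := Zsqrtd.norm_eq_mul_conj (π i)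
    rw [hπn i] at h
    exact_mod_cast h
  have hnds : ∀ i, ¬ π i ∣ star (π i) := fun i =>
    auxStmt11.not_dvd_star (hp i) (hp4 i) (hπn i) (hπp i)
  have hcross : ∀ i j : Fin k, i ≠ j → ∀ x y : GaussianInt,
      x.norm = (p i : ℤ) → y.norm = (p j : ℤ) → ¬ x ∣ y := by
    intro i j hij x y hx hy hdvd
    have h := auxStmt11.norm_dvd hdvd
    rw [hx, hy] at h
    have h2 : p i ∣ p j := Int.ofNat_dvd.mp h
    exact hij (hinj ((Nat.prime_dvd_prime_iff_eq (hp i) (hp j)).mp h2))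
  -- emultiplicity of π i in n
  have hemul_n : ∀ i : Fin k, emultiplicity (π i) ((n : ℕ) : GaussianInt) = (e i : ℕ∞) := by
    intro i
    have hprod : ((n : ℕ) : GaussianInt) = ∏ j : Fin k, (π j * star (π j)) ^ e j := by
      rw [hn]
      push_cast [hπstar]
      rfl
    rw [hprod, Finset.emultiplicity_prod (hπp i)]
    rw [Finset.sum_eq_single_of_mem i (Finset.mem_univ i)]
    · rw [emultiplicity_pow (hπp i), emultiplicity_mul (hπp i),
        emultiplicity_eq_zero.mpr (hnds i)]
      have h1 : emultiplicity (π i) (π i) = 1 := by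
        simpa using emultiplicity_pow_self_of_prime (hπp i) 1
      rw [h1]
      simp
    · intro j _ hji
      rw [emultiplicity_pow (hπp i), emultiplicity_mul (hπp i),
        emultiplicity_eq_zero.mpr (hcross i j (Ne.symm hji) _ _ (hπn i) (hπn j)),
        emultiplicity_eq_zero.mpr
          (hcross i j (Ne.symm hji) _ _ (hπn i) ((Zsqrtd.norm_conj (π j)).trans (hπn j)))]
      simp
  -- a + b = e for elements of norm n
  have hkey : ∀ z : GaussianInt, z.norm = (n : ℤ) → ∀ i : Fin k,
      multiplicity (π i) z + multiplicity (star (π i)) z = e i := by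
    intro z hz i
    have hzz : z * star z = ((n : ℕ) : GaussianInt) := by
      rw [← Zsqrtd.norm_eq_mul_conj, hz]
      norm_cast
    have he1 : emultiplicity (π i) z + emultiplicity (star (π i)) z = (e i : ℕ∞) := by
      have h2 : emultiplicity (π i) (star z) = emultiplicity (star (π i)) z := by
        have h3 := emultiplicity_map_eq (starMulAut (R := GaussianInt))
          (a := star (π i)) (b := z)
        simpa using h3
      rw [← h2, ← emultiplicity_mul (hπp i), hzz, hemul_n i]
    have hfin1 : FiniteMultiplicity (π i) z := by
      rw [finiteMultiplicity_iff_emultiplicity_ne_top]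
      intro h
      rw [h, top_add] at he1
      simp at he1
    have hfin2 : FiniteMultiplicity (star (π i)) z := by
      rw [finiteMultiplicity_iff_emultiplicity_ne_top]
      intro h
      rw [h, add_top] at he1
      simp at he1
    rw [hfin1.emultiplicity_eq_multiplicity, hfin2.emultiplicity_eq_multiplicity] at he1
    exact_mod_cast he1
  -- the invariant map
  set Z : ℤ × ℤ → GaussianInt := fun l => ⟨l.1, l.2⟩ with hZdef
  set F : ℤ × ℤ → (Fin k → ℕ) :=
    fun l i => if ℓ ≤ (i : ℕ) then multiplicity (π i) (Z l) else 0 with hFdef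
  set T : Finset (Fin k → ℕ) := Fintype.piFinset
    (fun i : Fin k => if ℓ ≤ (i : ℕ) then Finset.range (e i + 1) else ({0} : Finset ℕ)) with hTdef
  have hZnorm : ∀ l : ℤ × ℤ, l.1 ^ 2 + l.2 ^ 2 = (n : ℤ) → (Z l).norm = (n : ℤ) := by
    intro l h
    rw [hZdef]
    rw [Zsqrtd.norm_def]
    simp only []
    nlinarith [h]
  have hale : ∀ z : GaussianInt, z.norm = (n : ℤ) → ∀ i, multiplicity (π i) z ≤ e i := by
    intro z hz i
    have := hkey z hz i
    omega
  -- maps to T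
  have hmaps : ∀ l : ℤ × ℤ, l.1 ^ 2 + l.2 ^ 2 = (n : ℤ) → F l ∈ T := by
    intro l h1
    rw [hTdef, Fintype.mem_piFinset]
    intro i
    rcases le_or_gt ℓ (i : ℕ) with h | h
    · rw [if_pos h]
      simp only [hFdef, if_pos h]
      rw [Finset.mem_range, Nat.lt_succ_iff]
      exact hale _ (hZnorm l h1) i
    · rw [if_neg (by omega)]
      simp only [hFdef, if_neg (not_le.mpr h)]
      exact Finset.mem_singleton_self 0
  -- injectivity
  have hinjOn : ∀ l : ℤ × ℤ, (l.1 ^ 2 + l.2 ^ 2 = (n : ℤ) ∧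
        ‖((l.1 : ℝ) : ℂ) + ((l.2 : ℝ) : ℂ) * Complex.I
            - (Real.sqrt n : ℂ) * Complex.exp (2 * Real.pi * θ * Complex.I)‖
          < Real.sqrt ((n : ℝ) / (2 * (m : ℝ)))) →
      ∀ l' : ℤ × ℤ, (l'.1 ^ 2 + l'.2 ^ 2 = (n : ℤ) ∧
        ‖((l'.1 : ℝ) : ℂ) + ((l'.2 : ℝ) : ℂ) * Complex.I
            - (Real.sqrt n : ℂ) * Complex.exp (2 * Real.pi * θ * Complex.I)‖
          < Real.sqrt ((n : ℝ) / (2 * (m : ℝ)))) →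
      F l = F l' → l = l' := by
    intro l hl l' hl' hF
    obtain ⟨hl1, hl2⟩ := hl
    obtain ⟨hl1', hl2'⟩ := hl'
    by_contra hne
    have hz : (Z l).norm = (n : ℤ) := hZnorm l hl1
    have hz' : (Z l').norm = (n : ℤ) := hZnorm l' hl1'
    have hzz' : Z l ≠ Z l' := by
      intro h
      apply hne
      have h1 : (Z l).re = (Z l').re := by rw [h]
      have h2 : (Z l).im = (Z l').im := by rw [h]
      exact Prod.ext h1 h2
    have ha' : ∀ i : Fin k, ℓ ≤ (i : ℕ) →
        multiplicity (π i) (Z l') = multiplicity (π i) (Z l) := by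
      intro i hi
      have := congrFun hF i
      simp only [hFdef, if_pos hi] at this
      exact this.symm
    -- the common tail divisor
    set t : GaussianInt := ∏ i ∈ Finset.univ.filter (fun i : Fin k => ℓ ≤ (i : ℕ)),
      (π i ^ (multiplicity (π i) (Z l)) * star (π i) ^ (e i - multiplicity (π i) (Z l)))
      with htdef
    have hfactor : ∀ w : GaussianInt, w.norm = (n : ℤ) →
        (∀ i : Fin k, ℓ ≤ (i : ℕ) → multiplicity (π i) w = multiplicity (π i) (Z l)) →
        t ∣ w := by
      intro w hw haw
      refine Finset.prod_dvd_of_coprime ?_ ?_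
      · intro i _ j _ hij
        simp only [Function.onFun]
        have hc : ∀ x y : GaussianInt, Prime x → x.norm = (p i : ℤ) → y.norm = (p j : ℤ) →
            IsCoprime x y := fun x y hxp hx hy =>
          (hxp.coprime_iff_not_dvd).mpr (hcross i j hij x y hx hy)
        have c1 : IsCoprime (π i) (π j) := hc _ _ (hπp i) (hπn i) (hπn j)
        have c2 : IsCoprime (π i) (star (π j)) :=
          hc _ _ (hπp i) (hπn i) ((Zsqrtd.norm_conj (π j)).trans (hπn j))
        have c3 : IsCoprime (star (π i)) (π j) :=
          hc _ _ (auxStmt11.prime_of_norm (hp i) ((Zsqrtd.norm_conj (π i)).trans (hπn i)))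
            ((Zsqrtd.norm_conj (π i)).trans (hπn i)) (hπn j)
        have c4 : IsCoprime (star (π i)) (star (π j)) :=
          hc _ _ (auxStmt11.prime_of_norm (hp i) ((Zsqrtd.norm_conj (π i)).trans (hπn i)))
            ((Zsqrtd.norm_conj (π i)).trans (hπn i)) ((Zsqrtd.norm_conj (π j)).trans (hπn j))
        exact (c1.pow.mul_right c2.pow).mul_left (c3.pow.mul_right c4.pow)
      · intro i hi
        have hle : ℓ ≤ (i : ℕ) := (Finset.mem_filter.mp hi).2
        have h1 : π i ^ (multiplicity (π i) (Z l)) ∣ w := by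
          rw [← haw i hle]
          exact pow_multiplicity_dvd _ _
        have h2 : star (π i) ^ (e i - multiplicity (π i) (Z l)) ∣ w := by
          have hb : multiplicity (star (π i)) w = e i - multiplicity (π i) (Z l) := by
            have := hkey w hw i
            rw [haw i hle] at this
            omega
          rw [← hb]
          exact pow_multiplicity_dvd _ _
        exact (((hπp i).coprime_iff_not_dvd).mpr (hnds i)).pow.mul_dvd h1 h2
    have htz : t ∣ Z l := hfactor (Z l) hz fun i _ => rfl
    have htz' : t ∣ Z l' := hfactor (Z l') hz' ha'
    -- norm of t
    have hnt : t.norm = (M : ℤ) := by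
      rw [htdef, show (Zsqrtd.norm : GaussianInt → ℤ) = Zsqrtd.normMonoidHom by rfl,
        map_prod, hMdef]
      rw [Finset.prod_filter]
      push_cast
      refine Finset.prod_congr rfl fun i _ => ?_
      split
      · simp only [map_mul, map_pow]
        rw [show Zsqrtd.normMonoidHom (π i) = (p i : ℤ) from hπn i,
          show Zsqrtd.normMonoidHom (star (π i)) = (p i : ℤ) from
            (Zsqrtd.norm_conj (π i)).trans (hπn i)]
        rw [← pow_add]
        congr 1
        have := hale (Z l) hz i
        omega
      · rfl
    -- heads
    obtain ⟨g, hg⟩ := htz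
    obtain ⟨g', hg'⟩ := htz'
    have hMne : (M : ℤ) ≠ 0 := by exact_mod_cast hMpos.ne'
    have hng : g.norm = (m : ℤ) := by
      have h := congrArg Zsqrtd.norm hg
      rw [Zsqrtd.norm_mul, hnt, hz] at h
      have hn' : ((n : ℕ) : ℤ) = (m : ℤ) * (M : ℤ) := by exact_mod_cast hmM.symm
      rw [hn'] at h
      have := mul_left_cancel₀ hMne (by linarith [h] : (M : ℤ) * g.norm = (M : ℤ) * (m : ℤ))
      linarith [this]
    have hng' : g'.norm = (m : ℤ) := by
      have h := congrArg Zsqrtd.norm hg'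
      rw [Zsqrtd.norm_mul, hnt, hz'] at h
      have hn' : ((n : ℕ) : ℤ) = (m : ℤ) * (M : ℤ) := by exact_mod_cast hmM.symm
      rw [hn'] at h
      have := mul_left_cancel₀ hMne (by linarith [h] : (M : ℤ) * g'.norm = (M : ℤ) * (m : ℤ))
      linarith [this]
    have hgne : g ≠ g' := by
      intro h
      apply hzz'
      rw [hg, hg', h]
    have heven : 2 ∣ (g - g').norm := auxStmt11.even_norm_sub (hng.trans hng'.symm)
    have hposgg : 0 < (g - g').norm := GaussianInt.norm_pos.mpr (sub_ne_zero.mpr hgne)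
    have h2M : (2 * M : ℤ) ≤ (Z l - Z l').norm := by
      have hδ : Z l - Z l' = t * (g - g') := by rw [hg, hg']; ring
      rw [hδ, Zsqrtd.norm_mul, hnt]
      have h2 : (2 : ℤ) ≤ (g - g').norm := by omega
      nlinarith [hMpos, h2]
    -- geometric bound
    set c : ℂ := (Real.sqrt n : ℂ) * Complex.exp (2 * Real.pi * θ * Complex.I) with hcdef
    set u : ℂ := ((l.1 : ℝ) : ℂ) + ((l.2 : ℝ) : ℂ) * Complex.I with hudef
    set v : ℂ := ((l'.1 : ℝ) : ℂ) + ((l'.2 : ℝ) : ℂ) * Complex.I with hvdef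
    set r : ℝ := Real.sqrt ((n : ℝ) / (2 * (m : ℝ))) with hrdef
    have htri : ‖u - v‖ < 2 * r := by
      calc ‖u - v‖ ≤ ‖u - c‖ + ‖c - v‖ :=
            norm_sub_le_norm_sub_add_norm_sub u c v
        _ < r + r := by
            rw [← norm_neg (c - v), neg_sub]
            exact add_lt_add hl2 hl2'
        _ = 2 * r := by ring
    have hnormsub : (((Z l - Z l').norm : ℤ) : ℝ) = ‖u - v‖ ^ 2 := by
      rw [Complex.sq_norm]
      have huv : u - v = ((l.1 - l'.1 : ℤ) : ℝ) + ((l.2 - l'.2 : ℤ) : ℝ) * Complex.I := by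
        rw [hudef, hvdef]
        push_cast
        ring
      rw [huv, Complex.normSq_add_mul_I]
      rw [show Z l - Z l' = (⟨l.1 - l'.1, l.2 - l'.2⟩ : GaussianInt) by
        rw [hZdef]; ext <;> simp]
      rw [Zsqrtd.norm_def]
      push_cast
      ring
    have hrsq : r ^ 2 = (n : ℝ) / (2 * (m : ℝ)) := by
      rw [hrdef]
      rw [Real.sq_sqrt]
      positivity
    have hlt : (((Z l - Z l').norm : ℤ) : ℝ) < 2 * (M : ℝ) := by
      rw [hnormsub]
      have habs : ‖u - v‖ ^ 2 < (2 * r) ^ 2 := by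
        apply pow_lt_pow_left₀ htri (norm_nonneg _)
        norm_num
      have heq : (2 * r) ^ 2 = 2 * (M : ℝ) := by
        have hm0 : (m : ℝ) ≠ 0 := by exact_mod_cast hmpos.ne'
        have hnr : (n : ℝ) = (m : ℝ) * (M : ℝ) := by exact_mod_cast hmM.symm
        rw [mul_pow, hrsq, hnr]
        field_simp
      rw [heq] at habs
      exact habs
    have : (2 * (M : ℝ)) ≤ (((Z l - Z l').norm : ℤ) : ℝ) := by exact_mod_cast h2M
    linarith
  -- counting
  calc Set.ncard {l : ℤ × ℤ | l.1 ^ 2 + l.2 ^ 2 = (n : ℤ) ∧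
        ‖((l.1 : ℝ) : ℂ) + ((l.2 : ℝ) : ℂ) * Complex.I
            - (Real.sqrt n : ℂ) * Complex.exp (2 * Real.pi * θ * Complex.I)‖
          < Real.sqrt ((n : ℝ) / (2 * (m : ℝ)))}
      ≤ (↑T : Set (Fin k → ℕ)).ncard := by
        refine Set.ncard_le_ncard_of_injOn F (fun a ha => hmaps a ha.1)
          (fun a ha b hb hab => hinjOn a ha b hb hab) (T : Set (Fin k → ℕ)).toFinite
    _ = T.card := Set.ncard_coe_finset T
    _ = ∏ i : Fin k, (if ℓ ≤ (i : ℕ) then Finset.range (e i + 1) else ({0} : Finset ℕ)).card :=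
        Fintype.card_piFinset _
    _ = ∏ i : Fin k, (if ℓ ≤ (i : ℕ) then e i + 1 else 1) := by
        refine Finset.prod_congr rfl fun i _ => ?_
        split <;> simp
    _ ≤ 4 * ∏ i : Fin k, (if ℓ ≤ (i : ℕ) then e i + 1 else 1) :=
        Nat.le_mul_of_pos_left _ (by norm_num)
end

section
/- Let a, b be coprime positive integers with 0 < b < a < N, and ε > 1/(2N²). Then the number of pairs (x,y) of coprime integers with 0 < y < x < N and |y/x − b/a| < 2ε is O(εN²). -/
/-- Counting coprime pairs 0 < y < x < N with y/x in an interval of length 4ε around b/a: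
there are O(εN²) such pairs when ε > 1/(2N²). -/
theorem stmt16 : ∃ C : ℝ, 0 < C ∧ ∀ (N : ℕ) (a b : ℤ) (ε : ℝ),
    IsCoprime a b → 0 < b → b < a → a < (N : ℤ) → 1 / (2 * (N : ℝ) ^ 2) < ε →
    (Set.ncard {z : ℤ × ℤ | 0 < z.2 ∧ z.2 < z.1 ∧ z.1 < (N : ℤ) ∧ IsCoprime z.1 z.2 ∧
          |(z.2 : ℝ) / (z.1 : ℝ) - (b : ℝ) / (a : ℝ)| < 2 * ε} : ℝ)
      ≤ C * ε * (N : ℝ) ^ 2 := by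
  refine ⟨10, by norm_num, ?_⟩
  intro N a b ε hab hb hba haN hε
  set S : Set (ℤ × ℤ) := {z : ℤ × ℤ | 0 < z.2 ∧ z.2 < z.1 ∧ z.1 < (N : ℤ) ∧ IsCoprime z.1 z.2 ∧
          |(z.2 : ℝ) / (z.1 : ℝ) - (b : ℝ) / (a : ℝ)| < 2 * ε} with hSdef
  have hN3 : 3 ≤ (N : ℤ) := by omega
  have ha2 : 2 ≤ a := by omega
  have hNR : (3 : ℝ) ≤ (N : ℝ) := by exact_mod_cast hN3
  have hNpos : (0 : ℝ) < (N : ℝ) := by linarith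
  have hε0 : 0 < ε := lt_trans (by positivity) hε
  have h1 : (1 : ℝ) ≤ 2 * ε * (N : ℝ) ^ 2 := by
    rw [div_lt_iff₀ (by positivity)] at hε
    nlinarith
  have haR : (2 : ℝ) ≤ (a : ℝ) := by exact_mod_cast ha2
  have haNR : (a : ℝ) ≤ (N : ℝ) - 1 := by
    have : a ≤ (N : ℤ) - 1 := by omega
    exact_mod_cast this
  -- key pointwise bound
  have key : ∀ z ∈ S, |((a * z.2 - b * z.1 : ℤ) : ℝ)| < 2 * ε * a * N := by
    rintro ⟨x, y⟩ ⟨hy, hyx, hxN, hcop, habs⟩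
    have hx0 : (0 : ℤ) < x := lt_trans hy hyx
    have hxR : (0 : ℝ) < (x : ℝ) := by exact_mod_cast hx0
    have haR0 : (0 : ℝ) < (a : ℝ) := by linarith
    have hxNR : (x : ℝ) < (N : ℝ) := by exact_mod_cast hxN
    have hrw : (y : ℝ) / (x : ℝ) - (b : ℝ) / (a : ℝ)
        = ((a * y - b * x : ℤ) : ℝ) / ((x : ℝ) * (a : ℝ)) := by
      push_cast
      field_simp
    rw [hrw, abs_div] at habs
    rw [abs_of_pos (show (0:ℝ) < (x:ℝ) * (a:ℝ) by positivity)] at habs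
    rw [div_lt_iff₀ (by positivity)] at habs
    have h2 : 2 * ε * ((x:ℝ) * (a:ℝ)) ≤ 2 * ε * a * N := by
      nlinarith [mul_nonneg (mul_nonneg hε0.le haR0.le) (sub_nonneg.mpr hxNR.le)]
    exact lt_of_lt_of_le habs h2
  set D : ℤ := ⌊2 * ε * (a : ℝ) * (N : ℝ)⌋ with hD
  have hD0 : 0 ≤ D := Int.le_floor.2 (by push_cast; positivity)
  set Q : ℤ := ((N : ℤ) - 1) / a with hQ
  have hQ0 : 0 ≤ Q := Int.ediv_nonneg (by omega) (by omega)
  set S0 : Set (ℤ × ℤ) := S ∩ {z | a * z.2 - b * z.1 = 0} with hS0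
  set S1 : Set (ℤ × ℤ) := S ∩ {z | a * z.2 - b * z.1 ≠ 0} with hS1
  have hsplit : S = S0 ∪ S1 := by
    ext z; by_cases h : a * z.2 - b * z.1 = 0 <;> simp [hS0, hS1, h]
  -- S0 has at most one element
  have hS0card : S0.ncard ≤ 1 := by
    have hsub : S0 ⊆ {(a, b)} := by
      rintro ⟨x, y⟩ ⟨⟨hy, hyx, hxN, hcop, habs⟩, heq⟩
      simp only [Set.mem_setOf_eq] at heq
      have heq' : a * y = b * x := by linarith [heq]
      have hax : a ∣ x := by
        have : a ∣ b * x := ⟨y, heq'.symm⟩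
        exact IsCoprime.dvd_of_dvd_mul_left hab this
      obtain ⟨k, hk⟩ := hax
      have hyk : y = b * k := by
        have h' : a * y = a * (b * k) := by rw [heq', hk]; ring
        exact mul_left_cancel₀ (by omega) h'
      have hkdvd : IsUnit k :=
        IsCoprime.isUnit_of_dvd' hcop ⟨a, by linarith [hk]⟩ ⟨b, by linarith [hyk]⟩
      have hx0 : (0 : ℤ) < x := lt_trans hy hyx
      have hkval : k = 1 := by
        rcases Int.isUnit_iff.mp hkdvd with h | h
        · exact h
        · exfalso; rw [h] at hk; omega
      rw [hkval] at hk hyk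
      simp only [mul_one] at hk hyk
      simp [Set.mem_singleton_iff, Prod.ext_iff, hk, hyk]
    calc S0.ncard ≤ ({(a, b)} : Set (ℤ × ℤ)).ncard :=
          Set.ncard_le_ncard hsub (Set.finite_singleton _)
      _ = 1 := Set.ncard_singleton _
  -- S1 injects into a finite product
  set T : Finset (ℤ × ℤ) := ((Finset.Icc (-D) D).erase 0) ×ˢ Finset.Icc 0 Q with hT
  set f : ℤ × ℤ → ℤ × ℤ := fun z => (a * z.2 - b * z.1, z.1 / a) with hf
  have hmaps : ∀ z ∈ S1, f z ∈ (T : Set (ℤ × ℤ)) := by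
    rintro ⟨x, y⟩ ⟨hzS, hne⟩
    simp only [Set.mem_setOf_eq] at hne
    obtain ⟨hy, hyx, hxN, hcop, habs⟩ := hzS
    have hx0 : (0 : ℤ) < x := lt_trans hy hyx
    have hdbd := key (x, y) ⟨hy, hyx, hxN, hcop, habs⟩
    have hDle : |a * y - b * x| ≤ D := by
      refine Int.le_floor.2 ?_
      rw [Int.cast_abs]
      exact le_of_lt hdbd
    have habsle := abs_le.mp hDle
    rw [Finset.mem_coe, hT, Finset.mem_product, Finset.mem_erase, Finset.mem_Icc, Finset.mem_Icc]
    exact ⟨⟨hne, habsle.1, habsle.2⟩,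
      Int.ediv_nonneg (by omega) (by omega), Int.ediv_le_ediv (by omega) (by omega)⟩
  have hinj : Set.InjOn f S1 := by
    rintro ⟨x₁, y₁⟩ h₁ ⟨x₂, y₂⟩ h₂ heq
    simp only [hf, Prod.mk.injEq] at heq
    obtain ⟨hd, hq⟩ := heq
    have hbd : b * (x₁ - x₂) = a * (y₁ - y₂) := by linear_combination -hd
    have hadvd : a ∣ x₁ - x₂ :=
      IsCoprime.dvd_of_dvd_mul_left hab (hbd ▸ dvd_mul_right a (y₁ - y₂))
    have he1 := Int.mul_ediv_add_emod x₁ a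
    have he2 := Int.mul_ediv_add_emod x₂ a
    rw [← hq] at he2
    have hdiff : x₁ - x₂ = x₁ % a - x₂ % a := by omega
    obtain ⟨c, hc⟩ := hadvd
    have hm1 : x₁ % a < a := Int.emod_lt_of_pos _ (by omega)
    have hm2 : 0 ≤ x₁ % a := Int.emod_nonneg _ (by omega)
    have hm3 : x₂ % a < a := Int.emod_lt_of_pos _ (by omega)
    have hm4 : 0 ≤ x₂ % a := Int.emod_nonneg _ (by omega)
    have hc0 : c = 0 := by
      rcases lt_trichotomy c 0 with h | h | h
      · exfalso
        have hc1 : c ≤ -1 := by omega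
        have : a * c ≤ a * (-1) := mul_le_mul_of_nonneg_left hc1 (by omega)
        omega
      · exact h
      · exfalso
        have hc1 : 1 ≤ c := by omega
        have : a * 1 ≤ a * c := mul_le_mul_of_nonneg_left hc1 (by omega)
        omega
    have hx12 : x₁ = x₂ := by rw [hc0, mul_zero] at hc; omega
    have hy12 : y₁ = y₂ := by
      have : a * y₁ = a * y₂ := by rw [hx12] at hd; linarith [hd]
      exact mul_left_cancel₀ (by omega) this
    simp [hx12, hy12]
  have hS1card : S1.ncard ≤ T.card := by
    have := Set.ncard_le_ncard_of_injOn f hmaps hinj (T.finite_toSet)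
    rwa [Set.ncard_coe_finset] at this
  -- card of T
  have hTcard : T.card = (2 * D).toNat * (Q + 1).toNat := by
    rw [hT, Finset.card_product, Finset.card_erase_of_mem (by
        rw [Finset.mem_Icc]; omega), Int.card_Icc, Int.card_Icc]
    congr 1 <;> omega
  -- put it together
  have htotal : S.ncard ≤ 1 + (2 * D).toNat * (Q + 1).toNat := by
    calc S.ncard = (S0 ∪ S1).ncard := by rw [← hsplit]
      _ ≤ S0.ncard + S1.ncard := Set.ncard_union_le _ _
      _ ≤ 1 + (2 * D).toNat * (Q + 1).toNat := by
          rw [← hTcard]; exact Nat.add_le_add hS0card hS1card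
  -- real estimate
  have hDR : (D : ℝ) ≤ 2 * ε * a * N := Int.floor_le _
  have hQR : (Q : ℝ) * (a : ℝ) ≤ (N : ℝ) - 1 := by
    have := Int.ediv_mul_le ((N : ℤ) - 1) (show a ≠ 0 by omega)
    calc (Q : ℝ) * (a : ℝ) = ((Q * a : ℤ) : ℝ) := by push_cast; ring
      _ ≤ (((N : ℤ) - 1 : ℤ) : ℝ) := by exact_mod_cast this
      _ = (N : ℝ) - 1 := by push_cast; ring
  have hcast : (S.ncard : ℝ) ≤ 1 + (2 * (D:ℝ)) * ((Q:ℝ) + 1) := by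
    have h2 : (((2*D).toNat : ℤ) : ℝ) = 2 * (D:ℝ) := by
      rw [Int.toNat_of_nonneg (by omega)]; push_cast; ring
    have h3 : (((Q+1).toNat : ℤ) : ℝ) = (Q:ℝ) + 1 := by
      rw [Int.toNat_of_nonneg (by omega)]; push_cast; ring
    calc (S.ncard : ℝ) ≤ ((1 + (2 * D).toNat * (Q + 1).toNat : ℕ) : ℝ) := by
          exact_mod_cast htotal
      _ = 1 + (2 * (D:ℝ)) * ((Q:ℝ) + 1) := by push_cast [← h2, ← h3]; ring
  refine le_trans hcast ?_
  -- 1 + 2D(Q+1) ≤ 10 ε N²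
  have hDnn : (0:ℝ) ≤ (D:ℝ) := by exact_mod_cast hD0
  have hQnn : (0:ℝ) ≤ (Q:ℝ) := by exact_mod_cast hQ0
  have haR0 : (0:ℝ) < (a:ℝ) := by linarith
  -- Q ≤ (N-1)/a and D ≤ 2εaN give 2D(Q+1) ≤ 4εN(N-1+a) ≤ 8εN²
  have hkey : (2 * (D:ℝ)) * ((Q:ℝ) + 1) ≤ 8 * ε * (N:ℝ)^2 := by
    have hQa : (Q:ℝ) + 1 ≤ ((N:ℝ) - 1 + (a:ℝ)) / (a:ℝ) := by
      rw [le_div_iff₀ haR0]; nlinarith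
    have hstep : (2 * (D:ℝ)) * ((Q:ℝ) + 1) ≤ 2 * (2 * ε * a * N) * (((N:ℝ) - 1 + (a:ℝ)) / (a:ℝ)) := by
      apply mul_le_mul (by linarith) hQa (by linarith) (by positivity)
    calc (2 * (D:ℝ)) * ((Q:ℝ) + 1) ≤ 2 * (2 * ε * a * N) * (((N:ℝ) - 1 + (a:ℝ)) / (a:ℝ)) := hstep
      _ = 4 * ε * (N:ℝ) * ((N:ℝ) - 1 + (a:ℝ)) := by field_simp; ring
      _ ≤ 8 * ε * (N:ℝ)^2 := by nlinarith
  linarith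
end

section
/- Let g ≥ 1 and define f(t) = ((t+i)^g − (t−i)^g)/(2i) ∈ ℤ[t]. Then f and its derivative f' have no common root (equivalently gcd(f, f') = 1 in ℚ[t]), so f has no repeated roots. -/
open Polynomial

/-- f(t) = ((t+i)^g − (t−i)^g)/(2i), i.e. Im((t+i)^g) as a polynomial. -/
noncomputable def fpoly (g : ℕ) : Polynomial ℂ :=
  Polynomial.C (2 * Complex.I)⁻¹ *
    ((Polynomial.X + Polynomial.C Complex.I) ^ g - (Polynomial.X - Polynomial.C Complex.I) ^ g)

lemma fpoly_eval (g : ℕ) (z : ℂ) :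
    (fpoly g).eval z = (2 * Complex.I)⁻¹ * ((z + Complex.I) ^ g - (z - Complex.I) ^ g) := by
  simp [fpoly]

lemma fpoly_deriv (g : ℕ) :
    Polynomial.derivative (fpoly g) =
      Polynomial.C ((2 * Complex.I)⁻¹ * g) *
        ((Polynomial.X + Polynomial.C Complex.I) ^ (g - 1)
          - (Polynomial.X - Polynomial.C Complex.I) ^ (g - 1)) := by
  cases g with
  | zero => simp [fpoly]
  | succ n =>
    simp only [fpoly, derivative_mul, derivative_C, derivative_sub, derivative_pow,
      derivative_add, derivative_X, derivative_C, add_zero, sub_zero, mul_one,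
      Nat.succ_sub_one, zero_mul, zero_add, C_mul, Polynomial.C_eq_natCast]
    ring

/-- f and f' are coprime, so f has no repeated roots. -/
theorem stmt17 (g : ℕ) (hg : 1 ≤ g) :
    IsCoprime (fpoly g) (Polynomial.derivative (fpoly g)) ∧ Squarefree (fpoly g) := by
  have h2i : (2 * Complex.I) ≠ 0 := by simp [Complex.I_ne_zero]
  have hgC : (g : ℂ) ≠ 0 := Nat.cast_ne_zero.mpr (by omega)
  have hcop : IsCoprime (fpoly g) (Polynomial.derivative (fpoly g)) := by
    rw [Polynomial.isCoprime_iff_aeval_ne_zero_of_isAlgClosed (k := ℂ) ℂ]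
    intro z
    by_contra h
    push_neg at h
    obtain ⟨h1, h2⟩ := h
    simp only [Polynomial.aeval_def, eval₂_eq_eval_map, Algebra.algebraMap_self,
      Polynomial.map_id] at h1 h2
    rw [fpoly_eval] at h1
    rw [fpoly_deriv] at h2
    simp only [eval_mul, eval_C, eval_sub, eval_pow, eval_add, eval_X] at h2
    have e1 : (z + Complex.I) ^ g = (z - Complex.I) ^ g := by
      field_simp at h1; linear_combination h1
    have e2 : (z + Complex.I) ^ (g - 1) = (z - Complex.I) ^ (g - 1) := by
      rw [mul_eq_zero, mul_eq_zero] at h2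
      rcases h2 with (h | h) | h
      · exact absurd h (inv_ne_zero h2i)
      · exact absurd h hgC
      · exact sub_eq_zero.mp h
    have hzi : z + Complex.I ≠ 0 := by
      intro h
      have : z - Complex.I ≠ 0 := by
        intro h'
        have : (2 : ℂ) * Complex.I = 0 := by linear_combination h - h'
        exact h2i this
      have := e1
      rw [h, zero_pow (by omega)] at this
      exact (pow_ne_zero g ‹z - Complex.I ≠ 0›) this.symm
    have hzi' : z - Complex.I ≠ 0 := by
      intro h
      rw [h, zero_pow (by omega)] at e1
      exact (pow_ne_zero g hzi) e1
    have key : z + Complex.I = z - Complex.I := by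
      have hgsucc : g = (g - 1) + 1 := by omega
      rw [hgsucc, pow_succ, pow_succ, e2] at e1
      exact mul_left_cancel₀ (pow_ne_zero _ hzi') e1
    have : (2 : ℂ) * Complex.I = 0 := by linear_combination key
    exact h2i this
  have hne : fpoly g ≠ 0 := by
    intro h
    have := fpoly_eval g Complex.I
    rw [h] at this
    simp only [eval_zero] at this
    rw [sub_self, zero_pow (by omega), sub_zero] at this
    have : (Complex.I + Complex.I) ^ g = 0 := by
      field_simp at this; linear_combination -this
    have h2 : Complex.I + Complex.I ≠ 0 := by
      intro h'
      have : (2:ℂ) * Complex.I = 0 := by linear_combination h'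
      exact h2i this
    exact pow_ne_zero g h2 this
  exact ⟨hcop, (Polynomial.Separable.squarefree hcop)⟩
end
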